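/- On a periodic chain of even length N, the staggered XY operator Q = Σᵢ (-1)ⁱ (XᵢXᵢ₊₁ + YᵢYᵢ₊₁) does not in general commute with the XY Hamiltonian H = Σᵢ (J_X XᵢXᵢ₊₁ + J_Y YᵢYᵢ₊₁) unless J_X = -J_Y; that is, [Q,H] = 0 holds if J_X + J_Y = 0 (for N even, N ≥ 4). -/
import Mathlib


open Complex
open scoped Classical

noncomputable def σx : Matrix (Fin 2) (Fin 2) ℂ := !![0, 1; 1, 0]
noncomputable def σy : Matrix (Fin 2) (Fin 2) ℂ := !![0, -I; I, 0]
noncomputable def σz : Matrix (Fin 2) (Fin 2) ℂ := !![1, 0; 0, -1]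

/-- The single-site operator `M` acting on site `i` of a spin-1/2 chain of `N` sites
(tensored with the identity on all other sites). -/
noncomputable def pauliAt (N : ℕ) (i : Fin N) (M : Matrix (Fin 2) (Fin 2) ℂ) :
    Matrix (Fin N → Fin 2) (Fin N → Fin 2) ℂ :=
  fun f g => M (f i) (g i) * if ∀ j, j ≠ i → f j = g j then 1 else 0

lemma pauliAt_mul_same (N : ℕ) (i : Fin N) (M M' : Matrix (Fin 2) (Fin 2) ℂ) :
    pauliAt N i M * pauliAt N i M' = pauliAt N i (M * M') := by
  ext f g
  simp only [Matrix.mul_apply, pauliAt]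
  rw [← Finset.sum_subset (Finset.subset_univ
      ((Finset.univ : Finset (Fin 2)).image (Function.update f i)))]
  · rw [Finset.sum_image (fun a _ b _ hab => by simpa using congrFun hab i)]
    rw [Finset.sum_mul]
    refine Finset.sum_congr rfl fun k _ => ?_
    have h1 : ∀ j, j ≠ i → f j = Function.update f i k j :=
      fun j hj => (Function.update_of_ne hj k f).symm
    have h2 : (∀ j, j ≠ i → Function.update f i k j = g j) ↔ (∀ j, j ≠ i → f j = g j) :=
      forall_congr' fun j => imp_congr_right fun hj => by rw [Function.update_of_ne hj]
    rw [if_pos h1, Function.update_self, if_congr h2 rfl rfl]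
    ring
  · intro h _ hh
    have hn : ¬ (∀ j, j ≠ i → f j = h j) := by
      intro hc
      apply hh
      refine Finset.mem_image.mpr ⟨h i, Finset.mem_univ _, ?_⟩
      funext j
      by_cases hj : j = i
      · subst hj; rw [Function.update_self]
      · rw [Function.update_of_ne hj]; exact hc j hj
    rw [if_neg hn]
    ring

lemma pauliAt_apply_mul_distinct (N : ℕ) (i j : Fin N) (hij : i ≠ j)
    (M M' : Matrix (Fin 2) (Fin 2) ℂ) (f g : Fin N → Fin 2) :
    (pauliAt N i M * pauliAt N j M') f g
      = M (f i) (g i) * M' (f j) (g j) *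
        if ∀ k, k ≠ i → k ≠ j → f k = g k then 1 else 0 := by
  rw [Matrix.mul_apply, Finset.sum_eq_single (Function.update f i (g i))]
  · simp only [pauliAt, Function.update_self]
    rw [if_pos (fun k hk => (Function.update_of_ne hk _ f).symm)]
    rw [Function.update_of_ne (Ne.symm hij)]
    have h2 : (∀ k, k ≠ j → Function.update f i (g i) k = g k)
        ↔ (∀ k, k ≠ i → k ≠ j → f k = g k) := by
      constructor
      · intro h k hki hkj
        have := h k hkj
        rwa [Function.update_of_ne hki] at this
      · intro h k hkj
        by_cases hki : k = i
        · subst hki; rw [Function.update_self]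
        · rw [Function.update_of_ne hki]; exact h k hki hkj
    rw [if_congr h2 rfl rfl]
    ring
  · intro h _ hne
    simp only [pauliAt]
    by_cases c1 : ∀ k, k ≠ i → f k = h k
    · by_cases c2 : ∀ k, k ≠ j → h k = g k
      · exfalso
        apply hne
        funext k
        by_cases hk : k = i
        · subst hk
          rw [Function.update_self]
          exact c2 _ hij
        · rw [Function.update_of_ne hk]
          exact (c1 k hk).symm
      · rw [if_neg c2]; ring
    · rw [if_neg c1]; ring
  · intro hmem; exact absurd (Finset.mem_univ _) hmem

lemma pauliAt_comm (N : ℕ) (i j : Fin N) (hij : i ≠ j)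
    (M M' : Matrix (Fin 2) (Fin 2) ℂ) :
    pauliAt N i M * pauliAt N j M' = pauliAt N j M' * pauliAt N i M := by
  ext f g
  rw [pauliAt_apply_mul_distinct N i j hij, pauliAt_apply_mul_distinct N j i hij.symm]
  have h : (∀ k, k ≠ j → k ≠ i → f k = g k) ↔ (∀ k, k ≠ i → k ≠ j → f k = g k) :=
    ⟨fun h k a b => h k b a, fun h k a b => h k b a⟩
  rw [if_congr h rfl rfl]
  ring

lemma pauliAt_commute (N : ℕ) (i j : Fin N) (hij : i ≠ j)
    (M M' : Matrix (Fin 2) (Fin 2) ℂ) :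
    Commute (pauliAt N i M) (pauliAt N j M') := by
  show _ * _ = _ * _
  exact pauliAt_comm N i j hij M M'

lemma pauliAt_neg (N : ℕ) (i : Fin N) (M : Matrix (Fin 2) (Fin 2) ℂ) :
    pauliAt N i (-M) = -pauliAt N i M := by
  ext f g
  simp only [pauliAt, Matrix.neg_apply, neg_mul]

lemma sigma_xy : σx * σy = -(σy * σx) := by
  ext i j
  fin_cases i <;> fin_cases j <;>
    simp [σx, σy, Matrix.mul_apply, Fin.sum_univ_two]

lemma farCommute (N : ℕ) (a b c d : Fin N) (hac : a ≠ c) (had : a ≠ d)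
    (hbc : b ≠ c) (hbd : b ≠ d) (M₁ M₂ M₃ M₄ : Matrix (Fin 2) (Fin 2) ℂ) :
    Commute (pauliAt N a M₁ * pauliAt N b M₂) (pauliAt N c M₃ * pauliAt N d M₄) :=
  ((pauliAt_commute N a c hac M₁ M₃).mul_right (pauliAt_commute N a d had M₁ M₄)).mul_left
    ((pauliAt_commute N b c hbc M₂ M₃).mul_right (pauliAt_commute N b d hbd M₂ M₄))

lemma bond_mul (N : ℕ) (a b : Fin N) (hab : a ≠ b)
    (M₁ M₂ M₁' M₂' : Matrix (Fin 2) (Fin 2) ℂ) :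
    (pauliAt N a M₁ * pauliAt N b M₂) * (pauliAt N a M₁' * pauliAt N b M₂')
      = pauliAt N a (M₁ * M₁') * pauliAt N b (M₂ * M₂') := by
  rw [mul_assoc, ← mul_assoc (pauliAt N b M₂), pauliAt_comm N b a hab.symm,
    mul_assoc, ← mul_assoc, pauliAt_mul_same, pauliAt_mul_same]

lemma sameBond (N : ℕ) (a b : Fin N) (hab : a ≠ b) :
    Commute (pauliAt N a σx * pauliAt N b σx) (pauliAt N a σy * pauliAt N b σy) := by
  show _ * _ = _ * _
  rw [bond_mul N a b hab, bond_mul N a b hab, sigma_xy, pauliAt_neg, pauliAt_neg,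
    neg_mul_neg]

lemma quad1 (N : ℕ) (a b c : Fin N)
    (M₁ M₂ M₂' M₃ : Matrix (Fin 2) (Fin 2) ℂ) :
    (pauliAt N a M₁ * pauliAt N b M₂) * (pauliAt N b M₂' * pauliAt N c M₃)
      = pauliAt N a M₁ * (pauliAt N b (M₂ * M₂') * pauliAt N c M₃) := by
  rw [mul_assoc, ← mul_assoc (pauliAt N b M₂), pauliAt_mul_same]

lemma quad2 (N : ℕ) (a b c : Fin N) (hab : a ≠ b) (hbc : b ≠ c) (hac : a ≠ c)
    (M₂ M₃ M₁ M₂' : Matrix (Fin 2) (Fin 2) ℂ) :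
    (pauliAt N b M₂ * pauliAt N c M₃) * (pauliAt N a M₁ * pauliAt N b M₂')
      = pauliAt N a M₁ * (pauliAt N b (M₂ * M₂') * pauliAt N c M₃) := by
  rw [mul_assoc, ← mul_assoc (pauliAt N c M₃), pauliAt_comm N c a hac.symm,
    mul_assoc (pauliAt N a M₁), pauliAt_comm N c b hbc.symm, ← mul_assoc,
    pauliAt_comm N b a hab.symm, quad1]

lemma adj' (N : ℕ) (a b c : Fin N) (hab : a ≠ b) (hbc : b ≠ c) (hac : a ≠ c) :
    (pauliAt N a σx * pauliAt N b σx + pauliAt N a σy * pauliAt N b σy) *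
        (pauliAt N b σy * pauliAt N c σy - pauliAt N b σx * pauliAt N c σx)
      - (pauliAt N b σy * pauliAt N c σy - pauliAt N b σx * pauliAt N c σx) *
        (pauliAt N a σx * pauliAt N b σx + pauliAt N a σy * pauliAt N b σy)
    = (pauliAt N b σx * pauliAt N c σx + pauliAt N b σy * pauliAt N c σy) *
        (pauliAt N a σy * pauliAt N b σy - pauliAt N a σx * pauliAt N b σx)
      - (pauliAt N a σy * pauliAt N b σy - pauliAt N a σx * pauliAt N b σx) *
        (pauliAt N b σx * pauliAt N c σx + pauliAt N b σy * pauliAt N c σy) := by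
  simp only [add_mul, mul_add, sub_mul, mul_sub, quad1 N a b c,
    quad2 N a b c hab hbc hac]
  abel

lemma sum_pair {α : Type*} {M : Type*} [Fintype α] [AddCommGroup M]
    (c : α → α → M) (σ : α → α)
    (h0 : ∀ i j, j ≠ σ i → i ≠ σ j → c i j = 0)
    (hne : ∀ i, i ≠ σ (σ i))
    (hpair : ∀ i, c i (σ i) + c (σ i) i = 0) :
    ∑ i, ∑ j, c i j = 0 := by
  have hdec : ∀ i j, c i j
      = (if j = σ i then c i j else 0) + (if i = σ j then c i j else 0) := by
    intro i j
    by_cases h1 : j = σ i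
    · by_cases h2 : i = σ j
      · exact absurd (by rw [h1] at h2; exact h2) (hne i)
      · rw [if_pos h1, if_neg h2, add_zero]
    · by_cases h2 : i = σ j
      · rw [if_neg h1, if_pos h2, zero_add]
      · rw [if_neg h1, if_neg h2, add_zero]
        exact h0 i j h1 h2
  calc ∑ i, ∑ j, c i j
      = ∑ i, ∑ j, ((if j = σ i then c i j else 0) + (if i = σ j then c i j else 0)) :=
        Finset.sum_congr rfl fun i _ => Finset.sum_congr rfl fun j _ => hdec i j
    _ = (∑ i, ∑ j, if j = σ i then c i j else 0)
        + ∑ i, ∑ j, (if i = σ j then c i j else 0) := by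
        simp [Finset.sum_add_distrib]
    _ = (∑ i, c i (σ i)) + ∑ j, c (σ j) j := by
        congr 1
        · exact Finset.sum_congr rfl fun i _ => by simp
        · rw [Finset.sum_comm]
          exact Finset.sum_congr rfl fun j _ => by simp
    _ = ∑ i, (c i (σ i) + c (σ i) i) := by rw [Finset.sum_add_distrib]
    _ = 0 := by simp [hpair]

lemma comm_of_sum {α : Type*} {M : Type*} [Fintype α] [Ring M]
    (S T : α → M) (σ : α → α)
    (h0 : ∀ i j, j ≠ σ i → i ≠ σ j → S i * T j - T j * S i = 0)
    (hne : ∀ i, i ≠ σ (σ i))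
    (hpair : ∀ i, (S i * T (σ i) - T (σ i) * S i) + (S (σ i) * T i - T i * S (σ i)) = 0) :
    (∑ i, S i) * (∑ j, T j) - (∑ j, T j) * (∑ i, S i) = 0 := by
  rw [Finset.sum_mul_sum, Finset.sum_mul_sum]
  have h2 : ∑ j : α, ∑ i : α, T j * S i = ∑ i : α, ∑ j : α, T j * S i := Finset.sum_comm
  rw [h2, ← Finset.sum_sub_distrib]
  simp only [← Finset.sum_sub_distrib]
  exact sum_pair (fun i j => S i * T j - T j * S i) σ h0 hne hpair

lemma eps (N : ℕ) [NeZero N] (hNeven : Even N) (hN2 : 2 ≤ N) (i : Fin N) :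
    ((-1 : ℂ) ^ (((i + 1) : Fin N) : ℕ)) = -((-1 : ℂ) ^ (i : ℕ)) := by
  have h1 : ((1 : Fin N) : ℕ) = 1 := by
    rw [Fin.val_one']
    exact Nat.mod_eq_of_lt (by omega)
  have hadd : (((i + 1) : Fin N) : ℕ) = ((i : ℕ) + 1) % N := by
    rw [Fin.val_add, h1]
  by_cases hlt : (i : ℕ) + 1 < N
  · rw [hadd, Nat.mod_eq_of_lt hlt, pow_succ]
    ring
  · have hi : (i : ℕ) < N := i.isLt
    have heq : (i : ℕ) + 1 = N := by omega
    rw [hadd, heq, Nat.mod_self, pow_zero]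
    have hodd : Odd (i : ℕ) := by
      rw [Nat.odd_iff]
      have := Nat.even_iff.mp hNeven
      omega
    rw [hodd.neg_one_pow]
    norm_num

theorem staggered_XY_commutes_when_JX_eq_neg_JY
    (N : ℕ) [NeZero N] (hNeven : Even N) (hN : 4 ≤ N) (JX JY : ℝ)
    (hJ : JX = -JY)
    (H : Matrix (Fin N → Fin 2) (Fin N → Fin 2) ℂ)
    (hH : H = ∑ i : Fin N,
      ((JX : ℂ) • (pauliAt N i σx * pauliAt N (i + 1) σx)
        + (JY : ℂ) • (pauliAt N i σy * pauliAt N (i + 1) σy)))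
    (Q : Matrix (Fin N → Fin 2) (Fin N → Fin 2) ℂ)
    (hQ : Q = ∑ i : Fin N, ((-1 : ℂ) ^ (i : ℕ)) •
      (pauliAt N i σx * pauliAt N (i + 1) σx
        + pauliAt N i σy * pauliAt N (i + 1) σy)) :
    Q * H - H * Q = 0 := by
  subst hJ
  subst hH
  subst hQ
  -- basic distinctness facts about successors in `Fin N`
  have h1v : ((1 : Fin N) : ℕ) = 1 := by
    rw [Fin.val_one']
    exact Nat.mod_eq_of_lt (by omega)
  have h2v : ((1 + 1 : Fin N) : ℕ) = 2 := by
    rw [Fin.val_add, h1v]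
    exact Nat.mod_eq_of_lt (by omega)
  have hsucc : ∀ i : Fin N, i ≠ i + 1 := by
    intro i h
    have h2 : (0 : Fin N) = 1 := add_left_cancel (a := i) (by rw [add_zero]; exact h)
    have := congrArg Fin.val h2
    rw [Fin.val_zero, h1v] at this
    omega
  have hsucc2 : ∀ i : Fin N, i ≠ i + 1 + 1 := by
    intro i h
    rw [add_assoc] at h
    have h2 : (0 : Fin N) = 1 + 1 := add_left_cancel (a := i) (by rw [add_zero]; exact h)
    have := congrArg Fin.val h2
    rw [Fin.val_zero, h2v] at this
    omega
  -- rewrite the Hamiltonian bond terms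
  have hT : ∀ j : Fin N,
      ((↑(-JY) : ℂ)) • (pauliAt N j σx * pauliAt N (j + 1) σx)
        + (↑JY : ℂ) • (pauliAt N j σy * pauliAt N (j + 1) σy)
      = (JY : ℂ) • ((pauliAt N j σy * pauliAt N (j + 1) σy)
          - (pauliAt N j σx * pauliAt N (j + 1) σx)) := by
    intro j
    push_cast
    module
  simp only [hT]
  refine comm_of_sum _ _ (fun i => i + 1) ?_ ?_ ?_
  · -- far / diagonal commuting case
    intro i j hji hij'
    by_cases hij : i = j
    · subst hij
      have hAB := sameBond N i (i + 1) (hsucc i)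
      have hA : Commute
          (pauliAt N i σx * pauliAt N (i + 1) σx + pauliAt N i σy * pauliAt N (i + 1) σy)
          (pauliAt N i σx * pauliAt N (i + 1) σx) :=
        (Commute.refl _).add_left hAB.symm
      have hB : Commute
          (pauliAt N i σx * pauliAt N (i + 1) σx + pauliAt N i σy * pauliAt N (i + 1) σy)
          (pauliAt N i σy * pauliAt N (i + 1) σy) :=
        hAB.add_left (Commute.refl _)
      have hcom := (((hB.sub_right hA).smul_right ((JY : ℂ))).smul_left
        ((-1 : ℂ) ^ (i : ℕ)))
      rw [hcom.eq, sub_self]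
    · have hac : i ≠ j := hij
      have had : i ≠ j + 1 := hij'
      have hbc : i + 1 ≠ j := fun h => hji h.symm
      have hbd : i + 1 ≠ j + 1 := fun h => hij (add_right_cancel h)
      have hAA := farCommute N i (i + 1) j (j + 1) hac had hbc hbd σx σx σx σx
      have hAB := farCommute N i (i + 1) j (j + 1) hac had hbc hbd σx σx σy σy
      have hBA := farCommute N i (i + 1) j (j + 1) hac had hbc hbd σy σy σx σx
      have hBB := farCommute N i (i + 1) j (j + 1) hac had hbc hbd σy σy σy σy
      have hcom := ((((hAB.add_left hBB).sub_right (hAA.add_left hBA)).smul_right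
        ((JY : ℂ))).smul_left ((-1 : ℂ) ^ (i : ℕ)))
      rw [hcom.eq, sub_self]
  · intro i
    exact hsucc2 i
  · -- adjacent-bond cancellation
    intro i
    rw [eps N hNeven (by omega) i]
    have key := adj' N i (i + 1) (i + 1 + 1) (hsucc i) (hsucc (i + 1)) (hsucc2 i)
    have key2 : (pauliAt N (i+1) σx * pauliAt N (i+1+1) σx
          + pauliAt N (i+1) σy * pauliAt N (i+1+1) σy) *
        (pauliAt N i σy * pauliAt N (i+1) σy - pauliAt N i σx * pauliAt N (i+1) σx)
        = ((pauliAt N i σx * pauliAt N (i+1) σx + pauliAt N i σy * pauliAt N (i+1) σy) *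
            (pauliAt N (i+1) σy * pauliAt N (i+1+1) σy
              - pauliAt N (i+1) σx * pauliAt N (i+1+1) σx)
          - (pauliAt N (i+1) σy * pauliAt N (i+1+1) σy
              - pauliAt N (i+1) σx * pauliAt N (i+1+1) σx) *
            (pauliAt N i σx * pauliAt N (i+1) σx + pauliAt N i σy * pauliAt N (i+1) σy))
          + (pauliAt N i σy * pauliAt N (i+1) σy - pauliAt N i σx * pauliAt N (i+1) σx) *
            (pauliAt N (i+1) σx * pauliAt N (i+1+1) σx
              + pauliAt N (i+1) σy * pauliAt N (i+1+1) σy) := by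
      rw [key]
      abel
    simp only [smul_mul_assoc, mul_smul_comm, smul_smul]
    rw [key2]
    module
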